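/- Let A ⊆ {1,…,N} be nonempty. Define 𝒞 to be the set of pairs (C, C') of finite subsets of ℤ such that r(C) ≤ (N+1)/2, r(C') ≤ (N+1)/2, and there exists a ∈ A with C △ C' properly contained in s_a(A) and s_a(A) ⊆ C ∪ C'. Define 𝒞_N to be the set of pairs (B, B') of subsets of {1,…,N} such that r_N(B) ≤ (N+1)/2, r_N(B') ≤ (N+1)/2, and B △ B' is properly contained in A with A ⊆ B ∪ B'. Then the map (C, C') ↦ (π(C), π(C')) is a bijection from 𝒞 onto 𝒞_N. (Step 2 of the proof of the locality theorem in the Supplemental Material.) -/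
import Mathlib


/-- `projN N i` is the unique element of `{1, …, N}` congruent to `i` mod `N`. -/
def projN (N i : ℤ) : ℤ := (i - 1) % N + 1

/-- The cut `s_n` of the chain: `s_n i = i` if `i ≥ n`, and `i + N` if `i < n`. -/
def cutN (N n i : ℤ) : ℤ := if n ≤ i then i else i + N

/-- The range `r(A) = max A - min A + 1` of a finite nonempty set, with `r(∅) = 0`. -/
def rng (A : Finset ℤ) : ℤ := if h : A.Nonempty then A.max' h - A.min' h + 1 else 0

/-- `r_N(A) = min over n ∈ {1,…,N} of r(s_n(A))`. -/
noncomputable def rN (N : ℤ) (A : Finset ℤ) : ℤ :=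
  sInf ((fun n => rng (A.image (cutN N n))) '' Set.Icc 1 N)

section helpers
variable {N : ℤ}

lemma projN_mem (hN : 1 ≤ N) (i : ℤ) : 1 ≤ projN N i ∧ projN N i ≤ N := by
  unfold projN
  constructor
  · have := Int.emod_nonneg (i - 1) (by omega : N ≠ 0); omega
  · have := Int.emod_lt_of_pos (i - 1) (by omega : (0:ℤ) < N); omega

lemma dvd_sub_projN (i : ℤ) : N ∣ i - projN N i := by
  unfold projN
  have h : (i - 1) % N = i - 1 - N * ((i-1) / N) := Int.emod_def (i-1) N
  exact ⟨(i-1)/N, by omega⟩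

lemma eq_of_dvd_abs_lt (hN : 1 ≤ N) {x y : ℤ} (hd : N ∣ x - y) (h1 : x - y < N)
    (h2 : y - x < N) : x = y := by
  have h3 : x - y = 0 := Int.eq_zero_of_abs_lt_dvd hd (abs_lt.mpr ⟨by omega, h1⟩)
  omega

lemma projN_eq_self (hN : 1 ≤ N) {i : ℤ} (h1 : 1 ≤ i) (h2 : i ≤ N) : projN N i = i := by
  unfold projN
  rw [Int.emod_eq_of_lt (by omega) (by omega)]; omega

lemma projN_eq_iff_dvd (hN : 1 ≤ N) {x y : ℤ} : projN N x = projN N y ↔ N ∣ x - y := by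
  have h1 := dvd_sub_projN (N := N) x
  have h2 := dvd_sub_projN (N := N) y
  have hx := projN_mem hN x
  have hy := projN_mem hN y
  constructor
  · intro h
    have h3 := dvd_sub h1 h2
    rw [h] at h3
    have he : x - projN N y - (y - projN N y) = x - y := by ring
    rwa [he] at h3
  · intro h
    refine eq_of_dvd_abs_lt hN ?_ (by omega) (by omega)
    have h3 := dvd_sub (dvd_sub h1 h2) h
    have he : x - projN N x - (y - projN N y) - (x - y) = -(projN N x - projN N y) := by ring
    rw [he] at h3
    exact dvd_neg.mp h3

lemma cutN_mem (hN : 1 ≤ N) {n i : ℤ} (h1 : 1 ≤ i) (h2 : i ≤ N) (hn1 : 1 ≤ n) (hn2 : n ≤ N) :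
    n ≤ cutN N n i ∧ cutN N n i ≤ n + N - 1 := by
  unfold cutN; split <;> omega

lemma cutN_cases (n i : ℤ) : cutN N n i = i ∨ cutN N n i = i + N := by
  unfold cutN; split <;> simp

lemma dvd_cutN_sub (n i : ℤ) : N ∣ cutN N n i - i := by
  rcases cutN_cases (N := N) n i with h | h <;> rw [h] <;> simp

lemma projN_cutN (hN : 1 ≤ N) {i : ℤ} (n : ℤ) (h1 : 1 ≤ i) (h2 : i ≤ N) :
    projN N (cutN N n i) = i := by
  have h : projN N (cutN N n i) = projN N i := (projN_eq_iff_dvd hN).mpr (dvd_cutN_sub n i)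
  rw [h, projN_eq_self hN h1 h2]

lemma projN_add (hN : 1 ≤ N) {x k : ℤ} (hk : N ∣ k) : projN N (x + k) = projN N x :=
  (projN_eq_iff_dvd hN).mpr (by simpa using hk)

lemma cut_proj_eq (hN : 1 ≤ N) {n x : ℤ} (hn1 : 1 ≤ n) (hn2 : n ≤ N) (hx1 : n ≤ x)
    (hx2 : x ≤ n + N - 1) : cutN N n (projN N x) = x := by
  have ht := projN_mem hN x
  have hc := cutN_mem hN ht.1 ht.2 hn1 hn2
  refine eq_of_dvd_abs_lt hN ?_ (by omega) (by omega)
  have h1 := dvd_cutN_sub (N := N) n (projN N x)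
  have h2 := dvd_sub_projN (N := N) x
  have h3 := dvd_sub h1 h2
  have he : cutN N n (projN N x) - projN N x - (x - projN N x) = cutN N n (projN N x) - x := by
    ring
  rwa [he] at h3

lemma rng_nonneg (S : Finset ℤ) : 0 ≤ rng S := by
  unfold rng
  split
  · rename_i h
    have := S.min'_le _ (S.max'_mem h)
    omega
  · omega

lemma rng_spread {S : Finset ℤ} {x y : ℤ} (hx : x ∈ S) (hy : y ∈ S) : x - y + 1 ≤ rng S := by
  unfold rng
  have hne : S.Nonempty := ⟨x, hx⟩
  rw [dif_pos hne]
  have h1 := S.le_max' x hx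
  have h2 := S.min'_le y hy
  omega

lemma rng_translate (S : Finset ℤ) (k : ℤ) : rng (S.image (· + k)) = rng S := by
  unfold rng
  rcases S.eq_empty_or_nonempty with h | h
  · subst h; simp
  · have hne : (S.image (· + k)).Nonempty := h.image _
    rw [dif_pos hne, dif_pos h]
    have hmax : (S.image (· + k)).max' hne = S.max' h + k := by
      apply le_antisymm
      · apply Finset.max'_le
        intro y hy
        obtain ⟨z, hz, rfl⟩ := Finset.mem_image.mp hy
        have := S.le_max' z hz
        omega
      · exact Finset.le_max' (S.image (· + k)) (S.max' h + k) (Finset.mem_image.mpr ⟨S.max' h, S.max'_mem h, rfl⟩)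
    have hmin : (S.image (· + k)).min' hne = S.min' h + k := by
      apply le_antisymm
      · exact Finset.min'_le (S.image (· + k)) (S.min' h + k) (Finset.mem_image.mpr ⟨S.min' h, S.min'_mem h, rfl⟩)
      · apply Finset.le_min'
        intro y hy
        obtain ⟨z, hz, rfl⟩ := Finset.mem_image.mp hy
        have := S.min'_le z hz
        omega
    omega

end helpers

section rNlemmas
variable {N : ℤ}

lemma rN_bdd (N : ℤ) (B : Finset ℤ) :
    BddBelow ((fun n => rng (B.image (cutN N n))) '' Set.Icc 1 N) := by
  refine ⟨0, fun s hs => ?_⟩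
  obtain ⟨n, _, rfl⟩ := hs
  exact rng_nonneg _

lemma exists_cut (hN : 1 ≤ N) (B : Finset ℤ) :
    ∃ n, 1 ≤ n ∧ n ≤ N ∧ rng (B.image (cutN N n)) = rN N B := by
  have hne : ((fun n => rng (B.image (cutN N n))) '' Set.Icc 1 N).Nonempty :=
    ⟨_, ⟨1, Set.mem_Icc.mpr ⟨le_refl 1, hN⟩, rfl⟩⟩
  have := Int.csInf_mem hne (rN_bdd N B)
  obtain ⟨n, hn, heq⟩ := this
  exact ⟨n, (Set.mem_Icc.mp hn).1, (Set.mem_Icc.mp hn).2, heq⟩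

lemma rN_le_of (hN : 1 ≤ N) {C : Finset ℤ} (h : rng C ≤ N) :
    rN N (C.image (projN N)) ≤ rng C := by
  rcases C.eq_empty_or_nonempty with rfl | hC
  · have h0 : rng ((∅ : Finset ℤ).image (projN N)) = 0 := by simp [rng]
    have : rN N ((∅ : Finset ℤ).image (projN N)) ≤ 0 := by
      refine csInf_le (rN_bdd N _) ⟨1, Set.mem_Icc.mpr ⟨le_refl 1, hN⟩, ?_⟩
      simp [rng]
    simpa [rng] using this
  · set m := C.min' hC with hm
    set n := projN N m with hn
    have hn1 := (projN_mem hN m).1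
    have hn2 := (projN_mem hN m).2
    have hd : N ∣ n - m := by
      have := dvd_sub_projN (N := N) m
      rw [← hn] at this
      obtain ⟨k, hk⟩ := this
      exact ⟨-k, by rw [mul_neg]; omega⟩
    have key : (C.image (projN N)).image (cutN N n) = C.image (· + (n - m)) := by
      rw [Finset.image_image]
      apply Finset.image_congr
      intro x hx
      have hw1 : m ≤ x := C.min'_le x hx
      have hw2 : x - m + 1 ≤ rng C := by
        have := rng_spread hx (C.min'_mem hC)
        rw [← hm] at this
        exact this
      have hpe : projN N x = projN N (x + (n - m)) := (projN_add hN hd).symm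
      show cutN N n (projN N x) = x + (n - m)
      rw [hpe]
      exact cut_proj_eq hN hn1 hn2 (by omega) (by omega)
    refine le_trans (csInf_le (rN_bdd N _) ⟨n, Set.mem_Icc.mpr ⟨hn1, hn2⟩, rfl⟩) ?_
    show rng ((C.image (projN N)).image (cutN N n)) ≤ rng C
    rw [key, rng_translate]

end rNlemmas

section main
variable {N : ℤ}

lemma spread_pair (hN : 1 ≤ N) {C C' : Finset ℤ} (hC : 2 * rng C ≤ N + 1)
    (hC' : 2 * rng C' ≤ N + 1) {p x : ℤ} (hp1 : p ∈ C) (hp2 : p ∈ C')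
    (hx : x ∈ C ∪ C') : 2 * (x - p) ≤ N - 1 ∧ 2 * (p - x) ≤ N - 1 := by
  rcases Finset.mem_union.mp hx with h | h
  · have h1 := rng_spread h hp1
    have h2 := rng_spread hp1 h
    omega
  · have h1 := rng_spread h hp2
    have h2 := rng_spread hp2 h
    omega

lemma uniq_pair (hN : 1 ≤ N) {C C' : Finset ℤ} (hC : 2 * rng C ≤ N + 1)
    (hC' : 2 * rng C' ≤ N + 1) {p x y : ℤ} (hp1 : p ∈ C) (hp2 : p ∈ C')
    (hx : x ∈ C ∪ C') (hy : y ∈ C ∪ C') (hd : N ∣ x - y) : x = y := by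
  have h1 := spread_pair hN hC hC' hp1 hp2 hx
  have h2 := spread_pair hN hC hC' hp1 hp2 hy
  exact eq_of_dvd_abs_lt hN hd (by omega) (by omega)

lemma rN_img (hN : 1 ≤ N) {C : Finset ℤ} (hC : 2 * rng C ≤ N + 1) :
    2 * rN N (C.image (projN N)) ≤ N + 1 := by
  have := rN_le_of hN (C := C) (by omega)
  omega

lemma mapsto_part (hN : 1 ≤ N) (A : Finset ℤ) (hA : A ⊆ Finset.Icc 1 N)
    (C C' : Finset ℤ) (hC : 2 * rng C ≤ N + 1) (hC' : 2 * rng C' ≤ N + 1)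
    (a : ℤ) (haA : a ∈ A)
    (hΔ : (C ∪ C') \ (C ∩ C') ⊂ A.image (cutN N a))
    (hsub : A.image (cutN N a) ⊆ C ∪ C') :
    C.image (projN N) ⊆ Finset.Icc 1 N ∧ C'.image (projN N) ⊆ Finset.Icc 1 N ∧
    2 * rN N (C.image (projN N)) ≤ N + 1 ∧ 2 * rN N (C'.image (projN N)) ≤ N + 1 ∧
    (C.image (projN N) ∪ C'.image (projN N)) \ (C.image (projN N) ∩ C'.image (projN N)) ⊂ A ∧
    A ⊆ C.image (projN N) ∪ C'.image (projN N) := by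
  have hicc : ∀ D : Finset ℤ, D.image (projN N) ⊆ Finset.Icc 1 N := by
    intro D z hz
    obtain ⟨x, _, rfl⟩ := Finset.mem_image.mp hz
    exact Finset.mem_Icc.mpr (projN_mem hN x)
  have hproj : ∀ c ∈ A, projN N (cutN N a c) = c := by
    intro c hc
    have := Finset.mem_Icc.mp (hA hc)
    exact projN_cutN hN a this.1 this.2
  refine ⟨hicc C, hicc C', rN_img hN hC, rN_img hN hC', ?_, ?_⟩
  · -- Δ ⊂ A
    have hsubΔ : (C.image (projN N) ∪ C'.image (projN N)) \
        (C.image (projN N) ∩ C'.image (projN N)) ⊆ A := by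
      intro z hz
      obtain ⟨hzu, hzn⟩ := Finset.mem_sdiff.mp hz
      have hmain : ∃ x ∈ (C ∪ C') \ (C ∩ C'), projN N x = z := by
        rcases Finset.mem_union.mp hzu with h | h
        · obtain ⟨x, hx, rfl⟩ := Finset.mem_image.mp h
          refine ⟨x, Finset.mem_sdiff.mpr ⟨Finset.mem_union_left _ hx, fun hxx => ?_⟩, rfl⟩
          exact hzn (Finset.mem_inter.mpr ⟨Finset.mem_image_of_mem _ hx,
            Finset.mem_image_of_mem _ (Finset.mem_inter.mp hxx).2⟩)
        · obtain ⟨x, hx, rfl⟩ := Finset.mem_image.mp h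
          refine ⟨x, Finset.mem_sdiff.mpr ⟨Finset.mem_union_right _ hx, fun hxx => ?_⟩, rfl⟩
          exact hzn (Finset.mem_inter.mpr ⟨Finset.mem_image_of_mem _ (Finset.mem_inter.mp hxx).1,
            Finset.mem_image_of_mem _ hx⟩)
      obtain ⟨x, hx, rfl⟩ := hmain
      obtain ⟨c, hcA, rfl⟩ := Finset.mem_image.mp (hΔ.subset hx)
      rw [hproj c hcA]
      exact hcA
    refine (Finset.ssubset_iff_of_subset hsubΔ).mpr ?_
    obtain ⟨u, huS, huΔ⟩ := Finset.exists_of_ssubset hΔ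
    have huU : u ∈ C ∪ C' := hsub huS
    have huI : u ∈ C ∩ C' := by
      by_contra hcon
      exact huΔ (Finset.mem_sdiff.mpr ⟨huU, hcon⟩)
    obtain ⟨c, hcA, rfl⟩ := Finset.mem_image.mp huS
    refine ⟨c, hcA, fun hmem => ?_⟩
    have : c ∈ C.image (projN N) ∩ C'.image (projN N) := by
      refine Finset.mem_inter.mpr ⟨?_, ?_⟩
      · exact (hproj c hcA) ▸ Finset.mem_image_of_mem _ (Finset.mem_inter.mp huI).1
      · exact (hproj c hcA) ▸ Finset.mem_image_of_mem _ (Finset.mem_inter.mp huI).2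
    exact (Finset.mem_sdiff.mp hmem).2 this
  · -- A ⊆ union of images
    intro c hcA
    have hx : cutN N a c ∈ C ∪ C' := hsub (Finset.mem_image_of_mem _ hcA)
    rcases Finset.mem_union.mp hx with h | h
    · exact Finset.mem_union_left _ ((hproj c hcA) ▸ Finset.mem_image_of_mem _ h)
    · exact Finset.mem_union_right _ ((hproj c hcA) ▸ Finset.mem_image_of_mem _ h)

end main

section inj
variable {N : ℤ}

lemma subset_of_proj_subset (hN : 1 ≤ N) {C C' D D' : Finset ℤ}
    (hC : 2 * rng C ≤ N + 1) (hC' : 2 * rng C' ≤ N + 1)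
    (hD : 2 * rng D ≤ N + 1) (hD' : 2 * rng D' ≤ N + 1) {z : ℤ}
    (hz1 : z ∈ C) (hz2 : z ∈ C') (hz3 : z ∈ D) (hz4 : z ∈ D')
    (h1 : C.image (projN N) ⊆ D.image (projN N)) : C ⊆ D := by
  intro x hx
  have hmem : projN N x ∈ D.image (projN N) := h1 (Finset.mem_image_of_mem _ hx)
  obtain ⟨y, hy, hyp⟩ := Finset.mem_image.mp hmem
  have hdvd : N ∣ y - x := (projN_eq_iff_dvd hN).mp hyp
  have s1 := spread_pair hN hC hC' hz1 hz2 (Finset.mem_union_left _ hx)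
  have s2 := spread_pair hN hD hD' hz3 hz4 (Finset.mem_union_left _ hy)
  have : y = x := eq_of_dvd_abs_lt hN hdvd (by omega) (by omega)
  rwa [← this]

lemma inj_part (hN : 1 ≤ N) (A : Finset ℤ) (hA : A ⊆ Finset.Icc 1 N)
    {C C' D D' : Finset ℤ}
    (hC : 2 * rng C ≤ N + 1) (hC' : 2 * rng C' ≤ N + 1)
    (hD : 2 * rng D ≤ N + 1) (hD' : 2 * rng D' ≤ N + 1)
    {a : ℤ} (haA : a ∈ A)
    (hΔC : (C ∪ C') \ (C ∩ C') ⊂ A.image (cutN N a))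
    (hsubC : A.image (cutN N a) ⊆ C ∪ C')
    {a' : ℤ} (ha'A : a' ∈ A)
    (hΔD : (D ∪ D') \ (D ∩ D') ⊂ A.image (cutN N a'))
    (hsubD : A.image (cutN N a') ⊆ D ∪ D')
    (h1 : C.image (projN N) = D.image (projN N))
    (h2 : C'.image (projN N) = D'.image (projN N)) : C = D ∧ C' = D' := by
  have ha := Finset.mem_Icc.mp (hA haA)
  have ha' := Finset.mem_Icc.mp (hA ha'A)
  -- anchor u in C ∩ C'
  obtain ⟨u, huS, huΔ⟩ := Finset.exists_of_ssubset hΔC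
  have huU : u ∈ C ∪ C' := hsubC huS
  have huI : u ∈ C ∩ C' := by
    by_contra hcon
    exact huΔ (Finset.mem_sdiff.mpr ⟨huU, hcon⟩)
  have huI1 := (Finset.mem_inter.mp huI).1
  have huI2 := (Finset.mem_inter.mp huI).2
  obtain ⟨b, hbA, hub⟩ := Finset.mem_image.mp huS
  have hb := Finset.mem_Icc.mp (hA hbA)
  have hpu : projN N u = b := hub ▸ projN_cutN hN a hb.1 hb.2
  -- anchor w in D ∩ D'
  obtain ⟨w, hwS, hwΔ⟩ := Finset.exists_of_ssubset hΔD
  have hwU : w ∈ D ∪ D' := hsubD hwS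
  have hwI : w ∈ D ∩ D' := by
    by_contra hcon
    exact hwΔ (Finset.mem_sdiff.mpr ⟨hwU, hcon⟩)
  have hwI1 := (Finset.mem_inter.mp hwI).1
  have hwI2 := (Finset.mem_inter.mp hwI).2
  -- q := cutN N a' b lies in D ∩ D'
  set q := cutN N a' b with hqdef
  have hqU : q ∈ D ∪ D' := hsubD (Finset.mem_image_of_mem _ hbA)
  have hpq : projN N q = b := projN_cutN hN a' hb.1 hb.2
  have hbD : b ∈ D.image (projN N) := h1 ▸ (hpu ▸ Finset.mem_image_of_mem _ huI1)
  have hbD' : b ∈ D'.image (projN N) := h2 ▸ (hpu ▸ Finset.mem_image_of_mem _ huI2)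
  obtain ⟨y, hyD, hyp⟩ := Finset.mem_image.mp hbD
  obtain ⟨y', hyD', hyp'⟩ := Finset.mem_image.mp hbD'
  have hyy' : y = y' := by
    refine uniq_pair hN hD hD' hwI1 hwI2 (Finset.mem_union_left _ hyD)
      (Finset.mem_union_right _ hyD') ?_
    exact (projN_eq_iff_dvd hN).mp (by rw [hyp, hyp'])
  have hqy : q = y := by
    refine uniq_pair hN hD hD' hwI1 hwI2 hqU (Finset.mem_union_left _ hyD) ?_
    exact (projN_eq_iff_dvd hN).mp (by rw [hpq, hyp])
  have hqD : q ∈ D := hqy ▸ hyD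
  have hqD' : q ∈ D' := (hqy.trans hyy') ▸ hyD'
  -- cases on u, q
  have hu_cases : u = b ∨ u = b + N := hub ▸ cutN_cases a b
  have hq_cases : q = b ∨ q = b + N := cutN_cases a' b
  have huq : u = q := by
    rcases hu_cases with hu | hu <;> rcases hq_cases with hq | hq
    · omega
    · -- u = b, q = b + N : contradiction
      exfalso
      have hxU : cutN N a a' ∈ C ∪ C' := hsubC (Finset.mem_image_of_mem _ ha'A)
      have hx_ge : a' ≤ cutN N a a' := by
        rcases cutN_cases (N := N) a a' with h | h <;> omega
      have ha'D : a' ∈ D ∪ D' := by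
        have hcut : cutN N a' a' = a' := by simp [cutN]
        exact hcut ▸ hsubD (Finset.mem_image_of_mem _ ha'A)
      have s1 := spread_pair hN hC hC' huI1 huI2 hxU
      have s2 := spread_pair hN hD hD' hqD hqD' ha'D
      omega
    · -- u = b + N, q = b : contradiction
      exfalso
      have hy2U : cutN N a' a ∈ D ∪ D' := hsubD (Finset.mem_image_of_mem _ haA)
      have hy2_ge : a ≤ cutN N a' a := by
        rcases cutN_cases (N := N) a' a with h | h <;> omega
      have haC : a ∈ C ∪ C' := by
        have hcut : cutN N a a = a := by simp [cutN]
        exact hcut ▸ hsubC (Finset.mem_image_of_mem _ haA)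
      have s1 := spread_pair hN hC hC' huI1 huI2 haC
      have s2 := spread_pair hN hD hD' hqD hqD' hy2U
      omega
    · omega
  subst huq
  constructor
  · exact Finset.Subset.antisymm
      (subset_of_proj_subset hN hC hC' hD hD' huI1 huI2 hqD hqD' (Finset.subset_of_eq h1))
      (subset_of_proj_subset hN hD hD' hC hC' hqD hqD' huI1 huI2 (Finset.subset_of_eq h1.symm))
  · exact Finset.Subset.antisymm
      (subset_of_proj_subset hN hC' hC hD' hD huI2 huI1 hqD' hqD (Finset.subset_of_eq h2))
      (subset_of_proj_subset hN hD' hD hC' hC hqD' hqD huI2 huI1 (Finset.subset_of_eq h2.symm))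

end inj

section surj
variable {N : ℤ}

lemma surj_part (hN : 1 ≤ N) (A : Finset ℤ) (hA : A ⊆ Finset.Icc 1 N)
    {B B' : Finset ℤ} (hB : B ⊆ Finset.Icc 1 N) (hB' : B' ⊆ Finset.Icc 1 N)
    (hrB : 2 * rN N B ≤ N + 1) (hrB' : 2 * rN N B' ≤ N + 1)
    (hΔ : (B ∪ B') \ (B ∩ B') ⊂ A) (hsub : A ⊆ B ∪ B') :
    ∃ C C' : Finset ℤ,
      (2 * rng C ≤ N + 1 ∧ 2 * rng C' ≤ N + 1 ∧
        ∃ a ∈ A, (C ∪ C') \ (C ∩ C') ⊂ A.image (cutN N a) ∧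
          A.image (cutN N a) ⊆ C ∪ C') ∧
      C.image (projN N) = B ∧ C'.image (projN N) = B' := by
  obtain ⟨n, hn1, hn2, hrn⟩ := exists_cut hN B
  obtain ⟨n', hn'1, hn'2, hrn'⟩ := exists_cut hN B'
  set C₀ := B.image (cutN N n) with hC₀def
  set C₀' := B'.image (cutN N n') with hC₀'def
  have hrC₀ : 2 * rng C₀ ≤ N + 1 := by omega
  have hrC₀' : 2 * rng C₀' ≤ N + 1 := by omega
  obtain ⟨b, hbA, hbΔ⟩ := Finset.exists_of_ssubset hΔ
  have hbU : b ∈ B ∪ B' := hsub hbA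
  have hbI : b ∈ B ∩ B' := by
    by_contra hcon
    exact hbΔ (Finset.mem_sdiff.mpr ⟨hbU, hcon⟩)
  have hbB := (Finset.mem_inter.mp hbI).1
  have hbB' := (Finset.mem_inter.mp hbI).2
  have hb := Finset.mem_Icc.mp (hB hbB)
  set z := cutN N n b with hzdef
  set z' := cutN N n' b with hz'def
  have hz : z ∈ C₀ := Finset.mem_image_of_mem _ hbB
  have hz' : z' ∈ C₀' := Finset.mem_image_of_mem _ hbB'
  set δ := z - z' with hδdef
  have hδ : N ∣ δ := by
    have h1 := dvd_cutN_sub (N := N) n b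
    have h2 := dvd_cutN_sub (N := N) n' b
    have := dvd_sub h1 h2
    have he : cutN N n b - b - (cutN N n' b - b) = δ := by rw [hzdef, hz'def] at *; ring
    rwa [he] at this
  set T := C₀'.image (· + δ) with hTdef
  have hzT : z ∈ T := Finset.mem_image.mpr ⟨z', hz', by omega⟩
  have hrT : 2 * rng T ≤ N + 1 := by rw [hTdef, rng_translate]; exact hrC₀'
  have hpz : projN N z = b := hzdef ▸ projN_cutN hN n hb.1 hb.2
  -- projections of the pieces
  have himgC₀ : C₀.image (projN N) = B := by
    rw [hC₀def, Finset.image_image]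
    have : B.image (projN N ∘ cutN N n) = B.image id := by
      apply Finset.image_congr
      intro c hc
      have hcb := Finset.mem_Icc.mp (hB hc)
      exact projN_cutN hN n hcb.1 hcb.2
    rw [this, Finset.image_id]
  have himgT : T.image (projN N) = B' := by
    rw [hTdef, Finset.image_image]
    have : C₀'.image (projN N ∘ (· + δ)) = C₀'.image (projN N) := by
      apply Finset.image_congr
      intro x hx
      exact projN_add hN hδ
    rw [this, hC₀'def, Finset.image_image]
    have : B'.image (projN N ∘ cutN N n') = B'.image id := by
      apply Finset.image_congr
      intro c hc
      have hcb := Finset.mem_Icc.mp (hB' hc)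
      exact projN_cutN hN n' hcb.1 hcb.2
    rw [this, Finset.image_id]
  -- the lifted copy of A
  set L := (C₀ ∪ T).filter (fun x => projN N x ∈ A) with hLdef
  have hzL : z ∈ L := Finset.mem_filter.mpr ⟨Finset.mem_union_left _ hz, by rw [hpz]; exact hbA⟩
  have hLne : L.Nonempty := ⟨z, hzL⟩
  set m := L.min' hLne with hmdef
  have hmL : m ∈ L := L.min'_mem hLne
  set a := projN N m with hadef
  have haA : a ∈ A := (Finset.mem_filter.mp hmL).2
  have ha1 := (projN_mem hN m).1
  have ha2 := (projN_mem hN m).2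
  set k := a - m with hkdef
  have hk : N ∣ k := by
    obtain ⟨j, hj⟩ := dvd_sub_projN (N := N) m
    exact ⟨-j, by rw [mul_neg]; omega⟩
  -- window bounds for L
  have hwin : ∀ x ∈ L, m ≤ x ∧ x ≤ m + N - 1 := by
    intro x hx
    have h1 := L.min'_le x hx
    have s1 := spread_pair hN hrC₀ hrT hz hzT (Finset.mem_of_mem_filter x hx)
    have s2 := spread_pair hN hrC₀ hrT hz hzT (Finset.mem_of_mem_filter m hmL)
    omega
  -- key: lifts of A
  have hcut : ∀ x ∈ L, cutN N a (projN N x) = x + k := by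
    intro x hx
    have hw := hwin x hx
    have hpe : projN N x = projN N (x + k) := (projN_add hN hk).symm
    rw [hpe]
    exact cut_proj_eq hN ha1 ha2 (by omega) (by omega)
  have hLA : A.image (cutN N a) = L.image (· + k) := by
    apply Finset.Subset.antisymm
    · intro v hv
      obtain ⟨c, hcA, rfl⟩ := Finset.mem_image.mp hv
      have hcb := Finset.mem_Icc.mp (hA hcA)
      have hx : ∃ x ∈ C₀ ∪ T, projN N x = c := by
        rcases Finset.mem_union.mp (hsub hcA) with h | h
        · exact ⟨cutN N n c, Finset.mem_union_left _ (Finset.mem_image_of_mem _ h),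
            projN_cutN hN n hcb.1 hcb.2⟩
        · refine ⟨cutN N n' c + δ, Finset.mem_union_right _
            (Finset.mem_image.mpr ⟨cutN N n' c, Finset.mem_image_of_mem _ h, rfl⟩), ?_⟩
          rw [projN_add hN hδ]
          exact projN_cutN hN n' hcb.1 hcb.2
      obtain ⟨x, hxU, hxc⟩ := hx
      have hxL : x ∈ L := Finset.mem_filter.mpr ⟨hxU, by rw [hxc]; exact hcA⟩
      have := hcut x hxL
      rw [hxc] at this
      rw [this]
      exact Finset.mem_image_of_mem _ hxL
    · intro v hv
      obtain ⟨x, hxL, rfl⟩ := Finset.mem_image.mp hv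
      have hc : projN N x ∈ A := (Finset.mem_filter.mp hxL).2
      exact (hcut x hxL) ▸ Finset.mem_image_of_mem _ hc
  -- final sets
  refine ⟨C₀.image (· + k), T.image (· + k), ⟨?_, ?_, a, haA, ?_, ?_⟩, ?_, ?_⟩
  · rw [rng_translate]; exact hrC₀
  · rw [rng_translate]; exact hrT
  · -- Δ ⊂ A.image (cutN N a)
    have hsubΔ : (C₀.image (· + k) ∪ T.image (· + k)) \
        (C₀.image (· + k) ∩ T.image (· + k)) ⊆ A.image (cutN N a) := by
      intro v hv
      obtain ⟨hvu, hvn⟩ := Finset.mem_sdiff.mp hv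
      have hvU : ∃ x ∈ C₀ ∪ T, v = x + k := by
        rcases Finset.mem_union.mp hvu with h | h
        · obtain ⟨x, hx, rfl⟩ := Finset.mem_image.mp h
          exact ⟨x, Finset.mem_union_left _ hx, rfl⟩
        · obtain ⟨x, hx, rfl⟩ := Finset.mem_image.mp h
          exact ⟨x, Finset.mem_union_right _ hx, rfl⟩
      obtain ⟨x, hxU, rfl⟩ := hvU
      set c := projN N x with hcdef
      have hcBB' : c ∈ B ∪ B' := by
        rcases Finset.mem_union.mp hxU with h | h
        · exact Finset.mem_union_left _ (himgC₀ ▸ Finset.mem_image_of_mem _ h)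
        · exact Finset.mem_union_right _ (himgT ▸ Finset.mem_image_of_mem _ h)
      have hcA : c ∈ A := by
        by_contra hcon
        have hcI : c ∈ B ∩ B' := by
          by_contra hcon2
          exact hcon (hΔ.subset (Finset.mem_sdiff.mpr ⟨hcBB', hcon2⟩))
        have hcB := (Finset.mem_inter.mp hcI).1
        have hcB' := (Finset.mem_inter.mp hcI).2
        have hcb := Finset.mem_Icc.mp (hB hcB)
        have hx1 : cutN N n c ∈ C₀ := Finset.mem_image_of_mem _ hcB
        have hx2 : cutN N n' c + δ ∈ T :=
          Finset.mem_image.mpr ⟨cutN N n' c, Finset.mem_image_of_mem _ hcB', rfl⟩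
        have he1 : cutN N n c = x := by
          refine uniq_pair hN hrC₀ hrT hz hzT (Finset.mem_union_left _ hx1) hxU ?_
          refine (projN_eq_iff_dvd hN).mp ?_
          rw [projN_cutN hN n hcb.1 hcb.2, hcdef]
        have he2 : cutN N n' c + δ = x := by
          refine uniq_pair hN hrC₀ hrT hz hzT (Finset.mem_union_right _ hx2) hxU ?_
          refine (projN_eq_iff_dvd hN).mp ?_
          rw [projN_add hN hδ, projN_cutN hN n' hcb.1 hcb.2, hcdef]
        exact hvn (Finset.mem_inter.mpr ⟨Finset.mem_image_of_mem _ (he1 ▸ hx1),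
          Finset.mem_image_of_mem _ (he2 ▸ hx2)⟩)
      have hxL : x ∈ L := Finset.mem_filter.mpr ⟨hxU, hcA⟩
      rw [hLA]
      exact Finset.mem_image_of_mem _ hxL
    refine (Finset.ssubset_iff_of_subset hsubΔ).mpr ?_
    refine ⟨z + k, ?_, ?_⟩
    · rw [hLA]; exact Finset.mem_image_of_mem _ hzL
    · intro hmem
      exact (Finset.mem_sdiff.mp hmem).2 (Finset.mem_inter.mpr
        ⟨Finset.mem_image_of_mem _ hz, Finset.mem_image_of_mem _ hzT⟩)
  · -- A.image (cutN N a) ⊆ C ∪ C'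
    rw [hLA]
    intro v hv
    obtain ⟨x, hxL, rfl⟩ := Finset.mem_image.mp hv
    rcases Finset.mem_union.mp (Finset.mem_of_mem_filter x hxL) with h | h
    · exact Finset.mem_union_left _ (Finset.mem_image_of_mem _ h)
    · exact Finset.mem_union_right _ (Finset.mem_image_of_mem _ h)
  · -- image C = B
    rw [Finset.image_image]
    have : C₀.image (projN N ∘ (· + k)) = C₀.image (projN N) := by
      apply Finset.image_congr
      intro x hx
      exact projN_add hN hk
    rw [this, himgC₀]
  · rw [Finset.image_image]
    have : T.image (projN N ∘ (· + k)) = T.image (projN N) := by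
      apply Finset.image_congr
      intro x hx
      exact projN_add hN hk
    rw [this, himgT]

end surj

/-- Step 2 of the proof of the locality theorem: For nonempty
`A ⊆ {1,…,N}`, the map `(C, C') ↦ (π(C), π(C'))` is a bijection from the set
`𝒞` of pairs of finite subsets of `ℤ` with `r(C), r(C') ≤ (N+1)/2` and
`C △ C' ⊊ s_a(A) ⊆ C ∪ C'` for some `a ∈ A`, onto the set `𝒞_N` of pairs of
subsets of `{1,…,N}` with `r_N(B), r_N(B') ≤ (N+1)/2` and `B △ B' ⊊ A ⊆ B ∪ B'`. -/
theorem proj_bijOn_pairs (N : ℤ) (hN : 1 ≤ N)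
    (A : Finset ℤ) (hAne : A.Nonempty) (hA : A ⊆ Finset.Icc 1 N) :
    Set.BijOn
      (fun p : Finset ℤ × Finset ℤ => (p.1.image (projN N), p.2.image (projN N)))
      {p : Finset ℤ × Finset ℤ |
        2 * rng p.1 ≤ N + 1 ∧ 2 * rng p.2 ≤ N + 1 ∧
        ∃ a ∈ A, (p.1 ∪ p.2) \ (p.1 ∩ p.2) ⊂ A.image (cutN N a) ∧
          A.image (cutN N a) ⊆ p.1 ∪ p.2}
      {p : Finset ℤ × Finset ℤ |
        p.1 ⊆ Finset.Icc 1 N ∧ p.2 ⊆ Finset.Icc 1 N ∧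
        2 * rN N p.1 ≤ N + 1 ∧ 2 * rN N p.2 ≤ N + 1 ∧
        (p.1 ∪ p.2) \ (p.1 ∩ p.2) ⊂ A ∧ A ⊆ p.1 ∪ p.2} := by
  refine ⟨?_, ?_, ?_⟩
  · rintro ⟨C, C'⟩ ⟨hC, hC', a, haA, hΔ, hsub⟩
    exact mapsto_part hN A hA C C' hC hC' a haA hΔ hsub
  · rintro ⟨C, C'⟩ ⟨hC, hC', a, haA, hΔC, hsubC⟩ ⟨D, D'⟩ ⟨hD, hD', a', ha'A, hΔD, hsubD⟩ heq
    have h1 : C.image (projN N) = D.image (projN N) := congrArg Prod.fst heq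
    have h2 : C'.image (projN N) = D'.image (projN N) := congrArg Prod.snd heq
    obtain ⟨e1, e2⟩ := inj_part hN A hA hC hC' hD hD' haA hΔC hsubC ha'A hΔD hsubD h1 h2
    exact Prod.ext e1 e2
  · rintro ⟨B, B'⟩ ⟨hB, hB', hrB, hrB', hΔ, hsub⟩
    obtain ⟨C, C', hmem, hiB, hiB'⟩ := surj_part hN A hA hB hB' hrB hrB' hΔ hsub
    exact ⟨(C, C'), hmem, by simp [hiB, hiB']⟩
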